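/- Define f : D → ℝ on D = {(x,y) ∈ ℝ² : 2y > x²} by f(x,y) = (1/3)·(2y − x²)^{3/2}. Then f is C² on D with det(D²f)(x,y) = −1 for all (x,y) ∈ D, and f together with its gradient ∇f extends continuously by zero to the boundary parabola {2y = x²}. Hence f is the (inner) area distance of the parabola y = x²/2 and its graph is an indefinite improper affine sphere. -/

import Mathlib

noncomputable section

open Filter

/-- Gradient of `f : ℝ² → ℝ`. -/
def grad (f : ℝ × ℝ → ℝ) (p : ℝ × ℝ) : ℝ × ℝ :=
  (fderiv ℝ f p (1, 0), fderiv ℝ f p (0, 1))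

/-- Hessian of `f` at `p`, as a bilinear form. -/
def hess (f : ℝ × ℝ → ℝ) (p : ℝ × ℝ) (a b : ℝ × ℝ) : ℝ :=
  fderiv ℝ (fderiv ℝ f) p a b

/-- Determinant of the Hessian matrix of `f` at `p`. -/
def hessDet (f : ℝ × ℝ → ℝ) (p : ℝ × ℝ) : ℝ :=
  hess f p (1, 0) (1, 0) * hess f p (0, 1) (0, 1)
    - hess f p (1, 0) (0, 1) * hess f p (0, 1) (1, 0)

/-- The inner area distance of the parabola `y = x²/2`:
`f(x,y) = (1/3)(2y − x²)^{3/2}` on `D = {2y > x²}`. -/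
def fParab (w : ℝ × ℝ) : ℝ := (1 / 3) * (2 * w.2 - w.1 ^ 2) ^ ((3 : ℝ) / 2)

/-- The inner parabolic region `D = {(x,y) : 2y > x²}`. -/
def DParab : Set (ℝ × ℝ) := {w : ℝ × ℝ | w.1 ^ 2 < 2 * w.2}

namespace Stmt13

def gP (w : ℝ × ℝ) : ℝ := 2 * w.2 - w.1 ^ 2

def sP (w : ℝ × ℝ) : ℝ := gP w ^ ((1 : ℝ) / 2)

/-- The candidate first derivative, as a CLM-valued function. -/
def CP (w : ℝ × ℝ) : ℝ × ℝ →L[ℝ] ℝ :=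
  ContinuousLinearMap.snd ℝ ℝ ℝ - w.1 • ContinuousLinearMap.fst ℝ ℝ ℝ

def LP (w : ℝ × ℝ) : ℝ × ℝ →L[ℝ] ℝ := sP w • CP w

lemma CP_apply (w a : ℝ × ℝ) : CP w a = a.2 - w.1 * a.1 := by
  simp [CP]

lemma gP_pos {w : ℝ × ℝ} (hw : w ∈ DParab) : 0 < gP w := by
  simpa [gP, sub_pos, DParab] using hw

lemma hasFDerivAt_gP (w : ℝ × ℝ) :
    HasFDerivAt gP (2 • ContinuousLinearMap.snd ℝ ℝ ℝ
      - (2 * w.1) • ContinuousLinearMap.fst ℝ ℝ ℝ) w := by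
  have h1 := ((hasFDerivAt_snd (𝕜 := ℝ) (E := ℝ) (F := ℝ) (p := w)).const_mul 2).sub
    ((hasFDerivAt_fst (𝕜 := ℝ) (E := ℝ) (F := ℝ) (p := w)).mul
      (hasFDerivAt_fst (𝕜 := ℝ) (E := ℝ) (F := ℝ) (p := w)))
  have hfun : gP = fun w : ℝ × ℝ => 2 * w.2 - w.1 * w.1 := by
    funext q; simp [gP]; ring
  rw [hfun]
  refine h1.congr_fderiv ?_
  ext
  all_goals simp
  all_goals ring

lemma hasFDerivAt_fParab {w : ℝ × ℝ} (hw : w ∈ DParab) :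
    HasFDerivAt fParab (LP w) w := by
  have hg := hasFDerivAt_gP w
  have hpos := gP_pos hw
  have hr : HasDerivAt (fun t : ℝ => t ^ ((3 : ℝ) / 2))
      ((3 / 2) * gP w ^ ((3 : ℝ) / 2 - 1)) (gP w) :=
    (Real.hasStrictDerivAt_rpow_const (Or.inl hpos.ne')).hasDerivAt
  have h := (hr.comp_hasFDerivAt w hg).const_mul (1 / 3)
  have hfun : fParab = fun q => (1 / 3 : ℝ) * ((fun t : ℝ => t ^ ((3 : ℝ) / 2)) (gP q)) := by
    funext q; simp [fParab, gP]
  rw [hfun]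
  refine h.congr_fderiv ?_
  have h32 : (3 : ℝ) / 2 - 1 = 1 / 2 := by norm_num
  ext
  all_goals simp [LP, CP, sP, h32, smul_eq_mul]
  all_goals ring

lemma hasFDerivAt_sP {w : ℝ × ℝ} (hw : w ∈ DParab) :
    HasFDerivAt sP ((gP w ^ (-(1 : ℝ) / 2)) • CP w) w := by
  have hg := hasFDerivAt_gP w
  have hpos := gP_pos hw
  have hr : HasDerivAt (fun t : ℝ => t ^ ((1 : ℝ) / 2))
      ((1 / 2) * gP w ^ ((1 : ℝ) / 2 - 1)) (gP w) :=
    (Real.hasStrictDerivAt_rpow_const (Or.inl hpos.ne')).hasDerivAt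
  have h := hr.comp_hasFDerivAt w hg
  refine h.congr_fderiv ?_
  have h12 : (1 : ℝ) / 2 - 1 = -(1 : ℝ) / 2 := by norm_num
  ext
  all_goals simp [CP, h12, smul_eq_mul]
  all_goals ring

lemma isOpen_DParab : IsOpen DParab :=
  isOpen_lt (by fun_prop) (by fun_prop)

/-- Derivative of `LP`. -/
lemma hasFDerivAt_LP {w : ℝ × ℝ} (hw : w ∈ DParab) :
    HasFDerivAt LP
      (sP w • (-((ContinuousLinearMap.fst ℝ ℝ ℝ).smulRight (ContinuousLinearMap.fst ℝ ℝ ℝ)))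
        + ((gP w ^ (-(1 : ℝ) / 2)) • CP w).smulRight (CP w)) w := by
  have hC : HasFDerivAt CP
      (-((ContinuousLinearMap.fst ℝ ℝ ℝ).smulRight (ContinuousLinearMap.fst ℝ ℝ ℝ))) w := by
    have h2 : HasFDerivAt (fun q : ℝ × ℝ => q.1 • ContinuousLinearMap.fst ℝ ℝ ℝ)
        ((ContinuousLinearMap.fst ℝ ℝ ℝ).smulRight (ContinuousLinearMap.fst ℝ ℝ ℝ)) w := by
      have := (hasFDerivAt_fst (𝕜 := ℝ) (E := ℝ) (F := ℝ) (p := w)).smul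
        (hasFDerivAt_const (ContinuousLinearMap.fst ℝ ℝ ℝ) w)
      exact this.congr_fderiv (by simp)
    have h3 := (hasFDerivAt_const (ContinuousLinearMap.snd ℝ ℝ ℝ) w).sub h2
    exact h3.congr_fderiv (by simp)
  exact (hasFDerivAt_sP hw).smul hC

lemma hess_eq {w : ℝ × ℝ} (hw : w ∈ DParab) (a b : ℝ × ℝ) :
    hess fParab w a b
      = gP w ^ (-(1 : ℝ) / 2) * (a.2 - w.1 * a.1) * (b.2 - w.1 * b.1)
        - sP w * (a.1 * b.1) := by
  have heq : fderiv ℝ fParab =ᶠ[nhds w] LP := by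
    filter_upwards [isOpen_DParab.mem_nhds hw] with q hq
    exact (hasFDerivAt_fParab hq).fderiv
  have h1 : fderiv ℝ (fderiv ℝ fParab) w = fderiv ℝ LP w := heq.fderiv_eq
  have h2 := (hasFDerivAt_LP hw).fderiv
  rw [hess, h1, h2]
  simp [CP_apply, smul_eq_mul]
  ring

lemma grad_eq {w : ℝ × ℝ} (hw : w ∈ DParab) :
    grad fParab w = (-(w.1 * sP w), sP w) := by
  have h := (hasFDerivAt_fParab hw).fderiv
  simp [grad, h, LP, CP_apply, smul_eq_mul]
  ring

lemma continuous_sP : Continuous sP := by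
  rw [continuous_iff_continuousAt]
  intro w
  have hg : Continuous gP := by unfold gP; fun_prop
  exact (Real.continuousAt_rpow_const (gP w) _ (Or.inr (by norm_num))).comp
    hg.continuousAt

end Stmt13

open Stmt13
/-- `f(x,y) = (1/3)(2y − x²)^{3/2}` is C² on `D = {2y > x²}` with `det D²f ≡ −1`, and `f`
and `∇f` extend continuously by zero to the boundary parabola `{2y = x²}`: `f` is the
inner area distance of the parabola `y = x²/2`, and its graph is an indefinite improper
affine sphere. -/
theorem statement13 :
    ContDiffOn ℝ 2 fParab DParab ∧
    (∀ w ∈ DParab, hessDet fParab w = -1) ∧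
    (∀ x : ℝ,
      Tendsto fParab (nhdsWithin (x, x ^ 2 / 2) DParab) (nhds 0) ∧
      Tendsto (grad fParab) (nhdsWithin (x, x ^ 2 / 2) DParab) (nhds (0, 0))) := by
  refine ⟨?_, ?_, ?_⟩
  · intro w hw
    apply ContDiffAt.contDiffWithinAt
    have h1 : ContDiffAt ℝ 2 (fun t : ℝ => t ^ ((3 : ℝ) / 2)) (gP w) :=
      Real.contDiffAt_rpow_const_of_ne (gP_pos hw).ne'
    have h2 : ContDiffAt ℝ 2 gP w := by
      apply ContDiff.contDiffAt
      unfold gP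
      fun_prop
    exact contDiffAt_const.mul (h1.comp w h2)
  · intro w hw
    have hpos := gP_pos hw
    have key : sP w * gP w ^ (-(1 : ℝ) / 2) = 1 := by
      rw [sP, ← Real.rpow_add hpos]
      norm_num
    unfold hessDet
    rw [hess_eq hw, hess_eq hw, hess_eq hw, hess_eq hw]
    simp only []
    nlinarith [key]
  · intro x
    have hp : gP (x, x ^ 2 / 2) = 0 := by simp [gP]; ring
    have hsP0 : sP (x, x ^ 2 / 2) = 0 := by
      simp [sP, hp, Real.zero_rpow (by norm_num : (1 : ℝ) / 2 ≠ 0)]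
    constructor
    · have hc : ContinuousAt fParab (x, x ^ 2 / 2) := by
        have : ContinuousAt (fun t : ℝ => t ^ ((3 : ℝ) / 2)) (gP (x, x ^ 2 / 2)) :=
          Real.continuousAt_rpow_const _ _ (Or.inr (by norm_num))
        have hg : ContinuousAt gP (x, x ^ 2 / 2) := by
          have hg0 : Continuous gP := by unfold gP; fun_prop
          exact hg0.continuousAt
        exact continuousAt_const.mul (this.comp hg)
      have h0 : fParab (x, x ^ 2 / 2) = 0 := by
        have : (2 * (x ^ 2 / 2) - x ^ 2 : ℝ) = 0 := by ring
        simp [fParab, this, Real.zero_rpow (by norm_num : (3 : ℝ) / 2 ≠ 0)]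
      simpa [h0] using hc.continuousWithinAt.tendsto
    · have hc : ContinuousAt (fun w : ℝ × ℝ => (-(w.1 * sP w), sP w)) (x, x ^ 2 / 2) := by
        have hs := continuous_sP.continuousAt (x := (x, x ^ 2 / 2))
        fun_prop
      have h0 : (-(x * sP (x, x ^ 2 / 2)), sP (x, x ^ 2 / 2)) = ((0 : ℝ), (0 : ℝ)) := by
        simp [hsP0]
      have ht : Tendsto (fun w : ℝ × ℝ => (-(w.1 * sP w), sP w))
          (nhdsWithin (x, x ^ 2 / 2) DParab) (nhds ((0 : ℝ), (0 : ℝ))) := by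
        have := hc.continuousWithinAt.tendsto (s := DParab)
        simpa [h0] using this
      refine ht.congr' ?_
      filter_upwards [self_mem_nhdsWithin] with q hq
      exact (grad_eq hq).symm
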